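/- (One-step contraction from the proof of Theorem 1) Let Assumptions 1 and 2 hold, let B̄(k) be symmetric, and let x(k) ∈ [0,1]ⁿ. Then the next state x(k+1) = x(k) + h((I − X(k))B̄(k) − D(k))x(k) satisfies ‖x(k+1)‖ ≤ ρ(M(k))·‖x(k)‖, where ‖·‖ is the Euclidean norm and ρ the spectral radius. -/

import Mathlib

open Matrix

/-- Spectral radius of a real matrix: largest modulus of its complex eigenvalues. -/
noncomputable def specRad {n : ℕ} (M : Matrix (Fin n) (Fin n) ℝ) : ℝ :=
  sSup {r : ℝ | ∃ μ ∈ spectrum ℂ (M.map Complex.ofReal), r = ‖μ‖}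

/-- Euclidean norm on `ℝⁿ`. -/
noncomputable def euclNorm {n : ℕ} (x : Fin n → ℝ) : ℝ := Real.sqrt (∑ i, (x i) ^ 2)

open scoped Matrix.Norms.L2Operator in
/-- For a real symmetric matrix, the Euclidean norm of `M *ᵥ x` is at most
`specRad M * euclNorm x`. -/
theorem aux_symm_mulVec_le {n : ℕ} (hn : 0 < n) (M : Matrix (Fin n) (Fin n) ℝ)
    (hMsym : ∀ i j, M j i = M i j) (x : Fin n → ℝ) :
    euclNorm (M *ᵥ x) ≤ specRad M * euclNorm x := by
  classical
  haveI : NeZero n := ⟨hn.ne'⟩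
  set Mc : Matrix (Fin n) (Fin n) ℂ := M.map Complex.ofReal with hMc
  letI : CStarAlgebra (Matrix (Fin n) (Fin n) ℂ) := Matrix.instCStarAlgebra
  have hsa : _root_.IsSelfAdjoint Mc := by
    show star Mc = Mc
    rw [Matrix.star_eq_conjTranspose]
    ext i j
    simp [Matrix.conjTranspose_apply, Matrix.map_apply, hMc, hMsym i j]
  -- the spectrum of Mc
  have hfin : (spectrum ℂ Mc).Finite := Matrix.finite_spectrum Mc
  have hne : (spectrum ℂ Mc).Nonempty := spectrum.nonempty Mc
  obtain ⟨μ₀, hμ₀, hmax⟩ := Set.exists_max_image (spectrum ℂ Mc) (fun μ => ‖μ‖) hfin hne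
  -- spectral radius equals the norm
  have hrad : spectralRadius ℂ Mc = (‖μ₀‖₊ : ENNReal) := by
    rw [spectralRadius]
    refine le_antisymm (iSup₂_le fun k hk => ?_) (le_iSup₂ (f := fun k _ => (‖k‖₊ : ENNReal)) μ₀ hμ₀)
    exact_mod_cast (by simpa using hmax k hk : ‖k‖ ≤ ‖μ₀‖)
  have hnorm : ‖Mc‖ = ‖μ₀‖ := by
    have h1 := hsa.spectralRadius_eq_nnnorm
    rw [hrad] at h1
    have : ‖μ₀‖₊ = ‖Mc‖₊ := by exact_mod_cast h1
    rw [← coe_nnnorm, ← coe_nnnorm, this]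
  -- Mc's norm is at most specRad M
  have hle : ‖Mc‖ ≤ specRad M := by
    rw [hnorm]
    apply le_csSup
    · have : {r : ℝ | ∃ μ ∈ spectrum ℂ Mc, r = ‖μ‖} = (fun μ : ℂ => ‖μ‖) '' spectrum ℂ Mc := by
        ext r; simp [eq_comm]
      rw [this]
      exact (hfin.image _).bddAbove
    · exact ⟨μ₀, hμ₀, rfl⟩
  -- Euclidean norms
  set xc : EuclideanSpace ℂ (Fin n) := (EuclideanSpace.equiv (Fin n) ℂ).symm (fun i => (x i : ℂ))
  have hnx : ‖xc‖ = euclNorm x := by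
    rw [EuclideanSpace.norm_eq, euclNorm]
    congr 1
    refine Finset.sum_congr rfl fun i _ => ?_
    simp [xc, sq_abs]
  have hmv : Mc *ᵥ (xc : Fin n → ℂ) = fun i => ((M *ᵥ x) i : ℂ) := by
    funext i
    simp [Matrix.mulVec, dotProduct, Matrix.map_apply, hMc, xc]
  have hnmx : ‖(EuclideanSpace.equiv (Fin n) ℂ).symm (Mc *ᵥ (xc : Fin n → ℂ))‖ = euclNorm (M *ᵥ x) := by
    rw [hmv, EuclideanSpace.norm_eq, euclNorm]
    congr 1
    refine Finset.sum_congr rfl fun i _ => ?_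
    simp [sq_abs]
  calc euclNorm (M *ᵥ x) = ‖(EuclideanSpace.equiv (Fin n) ℂ).symm (Mc *ᵥ (xc : Fin n → ℂ))‖ := hnmx.symm
    _ ≤ ‖Mc‖ * ‖xc‖ := Matrix.l2_opNorm_mulVec Mc xc
    _ ≤ specRad M * euclNorm x := by
        rw [hnx]
        exact mul_le_mul_of_nonneg_right hle (by rw [← hnx]; exact norm_nonneg _)

theorem sis_one_step_contraction
    (n : ℕ) (h : ℝ) (hh : 0 < h)
    (δ : Fin n → ℝ) (Bbar : Matrix (Fin n) (Fin n) ℝ)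
    (hBsym : Bbar.IsSymm)
    -- Assumption 1
    (hA1δ : ∀ i, 0 ≤ h * δ i)
    (hA1B : ∀ i j, 0 ≤ Bbar i j)
    -- Assumption 2
    (hA2δ : ∀ i, h * δ i ≤ 1)
    (hA2B : ∀ i, h * ∑ j, Bbar i j ≤ 1)
    -- current state in [0,1]ⁿ and next state
    (x : Fin n → ℝ) (hx : ∀ i, x i ∈ Set.Icc (0 : ℝ) 1)
    (x' : Fin n → ℝ)
    (hx' : x' = x + h • (((1 - Matrix.diagonal x) * Bbar - Matrix.diagonal δ) *ᵥ x)) :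
    euclNorm x' ≤ specRad (1 - h • Matrix.diagonal δ + h • Bbar) * euclNorm x := by
  classical
  rcases Nat.eq_zero_or_pos n with hn | hn
  · subst hn
    simp [euclNorm, Finset.univ_eq_empty]
  set M : Matrix (Fin n) (Fin n) ℝ := 1 - h • Matrix.diagonal δ + h • Bbar with hM
  have hMsym : ∀ i j, M j i = M i j := by
    intro i j
    simp only [hM, Matrix.add_apply, Matrix.sub_apply, Matrix.smul_apply, Matrix.one_apply,
      Matrix.diagonal_apply, smul_eq_mul, hBsym.apply i j]
    by_cases hij : i = j <;> simp [hij, eq_comm]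
  -- explicit formulas for entries
  have hx'i : ∀ i, x' i = (1 - h * δ i) * x i + h * ((1 - x i) * ∑ j, Bbar i j * x j) := by
    intro i
    rw [hx']
    simp only [Pi.add_apply, Pi.smul_apply, smul_eq_mul, Matrix.mulVec, dotProduct,
      Matrix.sub_apply, Matrix.mul_apply, Matrix.one_apply, Matrix.diagonal_apply]
    have h1 : ∀ j, (∑ k, ((if i = k then (1:ℝ) else 0) - if i = k then x i else 0) * Bbar k j)
        = (1 - x i) * Bbar i j := by
      intro j
      rw [Finset.sum_eq_single i]
      · simp
      · intro k _ hk; simp [Ne.symm hk]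
      · simp
    simp only [h1]
    have h3 : ∀ j, ((1 - x i) * Bbar i j - if i = j then δ i else 0) * x j
        = (1 - x i) * (Bbar i j * x j) - (if i = j then δ i * x j else 0) := by
      intro j; by_cases hij : i = j <;> simp [hij] <;> ring
    simp only [h3]
    rw [Finset.sum_sub_distrib, ← Finset.mul_sum, Finset.sum_ite_eq]
    simp only [Finset.mem_univ, if_true]
    ring
  have hMxi : ∀ i, (M *ᵥ x) i = (1 - h * δ i) * x i + h * ∑ j, Bbar i j * x j := by
    intro i
    simp only [hM, Matrix.mulVec, dotProduct, Matrix.add_apply, Matrix.sub_apply,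
      Matrix.smul_apply, Matrix.one_apply, Matrix.diagonal_apply, smul_eq_mul]
    have h3 : ∀ j, ((if i = j then (1:ℝ) else 0) - h * (if i = j then δ i else 0) + h * Bbar i j) * x j
        = (if i = j then (1 - h * δ i) * x j else 0) + h * (Bbar i j * x j) := by
      intro j; by_cases hij : i = j <;> simp [hij] <;> ring
    simp only [h3]
    rw [Finset.sum_add_distrib, ← Finset.mul_sum, Finset.sum_ite_eq]
    simp only [Finset.mem_univ, if_true]
  have hSpos : ∀ i, 0 ≤ ∑ j, Bbar i j * x j := fun i =>
    Finset.sum_nonneg fun j _ => mul_nonneg (hA1B i j) (hx j).1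
  have hbound : ∀ i, 0 ≤ x' i ∧ x' i ≤ (M *ᵥ x) i := by
    intro i
    have h0 : 0 ≤ 1 - h * δ i := by linarith [hA2δ i]
    have h1 : 0 ≤ x i := (hx i).1
    have h2 : x i ≤ 1 := (hx i).2
    constructor
    · rw [hx'i i]
      exact add_nonneg (mul_nonneg h0 h1)
        (mul_nonneg hh.le (mul_nonneg (by linarith) (hSpos i)))
    · rw [hx'i i, hMxi i]
      have h4 : (1 - x i) * (∑ j, Bbar i j * x j) ≤ ∑ j, Bbar i j * x j :=
        mul_le_of_le_one_left (hSpos i) (by linarith)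
      have := mul_le_mul_of_nonneg_left h4 hh.le
      linarith
  have step1 : euclNorm x' ≤ euclNorm (M *ᵥ x) := by
    apply Real.sqrt_le_sqrt
    apply Finset.sum_le_sum
    intro i _
    exact pow_le_pow_left₀ (hbound i).1 (hbound i).2 2
  exact le_trans step1 (aux_symm_mulVec_le hn M hMsym x)
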